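/- arXiv:1605.07500 — 3 statements merged into one kernel-verified Lean document; each statement's English description precedes it below -/
import Mathlib

section
/- Subsolution construction: for any M ∈ M_D and r ∈ A_0, the process Y^{low} defined by Y^{low}_j := E_j[θ^{low}_j(r,M)] is a subsolution to the dynamic program; in particular Y^{low}_j = r_j^⊤ E_j[β_{j+1} θ^{low}_{j+1}] − F_j^{#}(r_j) ≤ F_j(E_j[β_{j+1} Y^{low}_{j+1}]) P-a.s. for every j = 0,...,J-1. -/
open MeasureTheory
open scoped ENNReal

noncomputable section

variable {Ω : Type*} {m0 : MeasurableSpace Ω}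

/-- `L^{∞-}`: membership in `L^p` for every finite `p ≥ 1`. -/
def MemLinfMinus {E : Type*} [NormedAddCommGroup E] (μ : Measure Ω) (f : Ω → E) : Prop :=
  ∀ p : ℝ≥0∞, 1 ≤ p → p ≠ ⊤ → MemLp f p μ

/-- Euclidean dot product on `Fin D → ℝ`. -/
def dotp {D : ℕ} (x y : Fin D → ℝ) : ℝ := ∑ d, x d * y d

/-- Componentwise conditional expectation of an `ℝ^D`-valued random vector. -/
def cexpV (μ : Measure Ω) (m : MeasurableSpace Ω) {D : ℕ} (f : Ω → Fin D → ℝ) :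
    Ω → Fin D → ℝ :=
  fun ω d => (μ[fun ω' => f ω' d|m]) ω

/-- The `ℝ^D`-valued process `β_j Y_j` (vector weight times scalar process). -/
def bprod {D : ℕ} (β : ℕ → Ω → Fin D → ℝ) (Y : ℕ → Ω → ℝ) (j : ℕ) : Ω → Fin D → ℝ :=
  fun ω d => β j ω d * Y j ω

/-- Convex (Fenchel) conjugate, with values in `EReal`. -/
def econj {D : ℕ} (f : (Fin D → ℝ) → ℝ) (u : Fin D → ℝ) : EReal :=
  ⨆ z : Fin D → ℝ, ((dotp u z - f z : ℝ) : EReal)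

/-- Real-valued version of the convex conjugate (meaningful where the conjugate is finite). -/
def rconj {D : ℕ} (f : (Fin D → ℝ) → ℝ) (u : Fin D → ℝ) : ℝ := (econj f u).toReal

/-- The Doob martingale of an `ℝ^D`-valued process `Z`:
`j ↦ ∑_{i=0}^{j-1} (Z_{i+1} - E_i[Z_{i+1}])`. -/
def doobMart (μ : Measure Ω) (ℱ : Filtration ℕ m0) {D : ℕ} (Z : ℕ → Ω → Fin D → ℝ) :
    ℕ → Ω → Fin D → ℝ :=
  fun j ω d => ∑ i ∈ Finset.range j, (Z (i + 1) ω d - cexpV μ (ℱ i) (Z (i + 1)) ω d)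

/-- Standing assumptions on the data `(F, β, ξ)` of the convex dynamic program:
measurability, adaptedness and convexity of the generator, polynomial growth with an
`L^{∞-}` coefficient, and integrability/adaptedness of the weights and terminal condition. -/
structure Setting (μ : Measure Ω) (ℱ : Filtration ℕ m0) (J D : ℕ)
    (F : ℕ → Ω → (Fin D → ℝ) → ℝ) (β : ℕ → Ω → Fin D → ℝ) (ξ : Ω → ℝ) : Prop where
  F_meas : ∀ j < J, Measurable fun p : Ω × (Fin D → ℝ) => F j p.1 p.2
  F_adapted : ∀ j < J, ∀ z : Fin D → ℝ, StronglyMeasurable[ℱ j] fun ω => F j ω z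
  F_convex : ∀ j < J, ∀ ω, ConvexOn ℝ Set.univ (F j ω)
  F_growth : ∃ q : ℝ, 0 ≤ q ∧ ∃ α : ℕ → Ω → ℝ,
      (∀ j < J, StronglyMeasurable[ℱ j] (α j)) ∧
      (∀ j < J, ∀ᵐ ω ∂μ, 0 ≤ α j ω) ∧ (∀ j < J, MemLinfMinus μ (α j)) ∧
      ∀ j < J, ∀ z : Fin D → ℝ, ∀ᵐ ω ∂μ, |F j ω z| ≤ α j ω * (1 + ‖z‖ ^ q)
  β_adapted : ∀ j ≤ J, StronglyMeasurable[ℱ j] (β j)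
  β_int : ∀ j ≤ J, MemLinfMinus μ (β j)
  ξ_meas : StronglyMeasurable[ℱ J] ξ
  ξ_int : MemLinfMinus μ ξ

/-- `Y` is an adapted `L^{∞-}` solution of the dynamic programming equation
`Y_j = F_j(E_j[β_{j+1} Y_{j+1}])`, `Y_J = ξ`. -/
def IsSolution (μ : Measure Ω) (ℱ : Filtration ℕ m0) (J D : ℕ)
    (F : ℕ → Ω → (Fin D → ℝ) → ℝ) (β : ℕ → Ω → Fin D → ℝ) (ξ : Ω → ℝ)
    (Y : ℕ → Ω → ℝ) : Prop :=
  (∀ j ≤ J, StronglyMeasurable[ℱ j] (Y j) ∧ MemLinfMinus μ (Y j)) ∧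
  (∀ᵐ ω ∂μ, Y J ω = ξ ω) ∧
  (∀ j < J, ∀ᵐ ω ∂μ, Y j ω = F j ω (cexpV μ (ℱ j) (bprod β Y (j + 1)) ω))

/-- Supersolution of the dynamic program. -/
def IsSupersolution (μ : Measure Ω) (ℱ : Filtration ℕ m0) (J D : ℕ)
    (F : ℕ → Ω → (Fin D → ℝ) → ℝ) (β : ℕ → Ω → Fin D → ℝ) (ξ : Ω → ℝ)
    (Y : ℕ → Ω → ℝ) : Prop :=
  (∀ j ≤ J, StronglyMeasurable[ℱ j] (Y j) ∧ MemLinfMinus μ (Y j)) ∧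
  (∀ᵐ ω ∂μ, ξ ω ≤ Y J ω) ∧
  (∀ j < J, ∀ᵐ ω ∂μ, F j ω (cexpV μ (ℱ j) (bprod β Y (j + 1)) ω) ≤ Y j ω)

/-- Subsolution of the dynamic program. -/
def IsSubsolution (μ : Measure Ω) (ℱ : Filtration ℕ m0) (J D : ℕ)
    (F : ℕ → Ω → (Fin D → ℝ) → ℝ) (β : ℕ → Ω → Fin D → ℝ) (ξ : Ω → ℝ)
    (Y : ℕ → Ω → ℝ) : Prop :=
  (∀ j ≤ J, StronglyMeasurable[ℱ j] (Y j) ∧ MemLinfMinus μ (Y j)) ∧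
  (∀ᵐ ω ∂μ, Y J ω ≤ ξ ω) ∧
  (∀ j < J, ∀ᵐ ω ∂μ, Y j ω ≤ F j ω (cexpV μ (ℱ j) (bprod β Y (j + 1)) ω))

/-- The monotonicity assumption: `Y⁽¹⁾ ≥ Y⁽²⁾` a.s. implies
`F_j(β_{j+1} Y⁽¹⁾) ≥ F_j(β_{j+1} Y⁽²⁾)` a.s. -/
def MonoAssumption (μ : Measure Ω) (J D : ℕ)
    (F : ℕ → Ω → (Fin D → ℝ) → ℝ) (β : ℕ → Ω → Fin D → ℝ) : Prop :=
  ∀ j < J, ∀ Y1 Y2 : Ω → ℝ, MemLinfMinus μ Y1 → MemLinfMinus μ Y2 →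
    (∀ᵐ ω ∂μ, Y2 ω ≤ Y1 ω) →
    ∀ᵐ ω ∂μ, F j ω (fun d => β (j + 1) ω d * Y2 ω) ≤ F j ω (fun d => β (j + 1) ω d * Y1 ω)

/-- The class `M_D` of `ℝ^D`-valued `L^{∞-}` martingales. -/
def IsMartD (μ : Measure Ω) (ℱ : Filtration ℕ m0) {D : ℕ}
    (M : ℕ → Ω → Fin D → ℝ) : Prop :=
  Martingale M ℱ μ ∧ ∀ j, MemLinfMinus μ (M j)

/-- Admissible controls on the time indices `{j₀, ..., J-1}` (the class `A_{j₀}`). -/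
def IsAdmissibleFrom (μ : Measure Ω) (ℱ : Filtration ℕ m0) (j₀ J D : ℕ)
    (F : ℕ → Ω → (Fin D → ℝ) → ℝ) (r : ℕ → Ω → Fin D → ℝ) : Prop :=
  ∀ i, j₀ ≤ i → i < J →
    StronglyMeasurable[ℱ i] (r i) ∧ MemLinfMinus μ (r i) ∧
    (∀ᵐ ω ∂μ, econj (F i ω) (r i ω) ≠ ⊤) ∧
    MemLinfMinus μ (fun ω => rconj (F i ω) (r i ω))

/-- The lower pathwise recursion `θ^{low}(r, M)`:
`θ_J = ξ`, `θ_i = r_i^⊤ (β_{i+1} θ_{i+1}) - r_i^⊤ ΔM_{i+1} - F_i^{#}(r_i)`,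
required on the time indices `{j₀, ..., J-1}`. -/
def IsThetaLowFrom (μ : Measure Ω) (j₀ J D : ℕ)
    (F : ℕ → Ω → (Fin D → ℝ) → ℝ) (β : ℕ → Ω → Fin D → ℝ) (ξ : Ω → ℝ)
    (r M : ℕ → Ω → Fin D → ℝ) (θ : ℕ → Ω → ℝ) : Prop :=
  (∀ᵐ ω ∂μ, θ J ω = ξ ω) ∧
  ∀ i, j₀ ≤ i → i < J → ∀ᵐ ω ∂μ,
    θ i ω = dotp (r i ω) (fun d => β (i + 1) ω d * θ (i + 1) ω)
      - dotp (r i ω) (fun d => M (i + 1) ω d - M i ω d) - rconj (F i ω) (r i ω)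

/-- The upper pathwise recursion `θ^{up}(M)`:
`θ_J = ξ`, `θ_j = F_j(β_{j+1} θ_{j+1} - ΔM_{j+1})`. -/
def IsThetaUp (μ : Measure Ω) (J D : ℕ)
    (F : ℕ → Ω → (Fin D → ℝ) → ℝ) (β : ℕ → Ω → Fin D → ℝ) (ξ : Ω → ℝ)
    (M : ℕ → Ω → Fin D → ℝ) (θ : ℕ → Ω → ℝ) : Prop :=
  (∀ᵐ ω ∂μ, θ J ω = ξ ω) ∧
  ∀ j < J, ∀ᵐ ω ∂μ,
    θ j ω = F j ω (fun d => β (j + 1) ω d * θ (j + 1) ω - (M (j + 1) ω d - M j ω d))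

/-- The optimality condition `r_i^⊤ E_i[β_{i+1} Y_{i+1}] - F_i^{#}(r_i) = F_i(E_i[β_{i+1} Y_{i+1}])`
on the time indices `{j₀, ..., J-1}`. -/
def OptimalityCond (μ : Measure Ω) (ℱ : Filtration ℕ m0) (j₀ J D : ℕ)
    (F : ℕ → Ω → (Fin D → ℝ) → ℝ) (β : ℕ → Ω → Fin D → ℝ)
    (Y : ℕ → Ω → ℝ) (r : ℕ → Ω → Fin D → ℝ) : Prop :=
  ∀ i, j₀ ≤ i → i < J → ∀ᵐ ω ∂μ,
    dotp (r i ω) (cexpV μ (ℱ i) (bprod β Y (i + 1)) ω) - rconj (F i ω) (r i ω)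
      = F i ω (cexpV μ (ℱ i) (bprod β Y (i + 1)) ω)


namespace SubsolAux

open Filter

variable {μ : Measure Ω}

lemma lm_aesm {E : Type*} [NormedAddCommGroup E] {f : Ω → E}
    (hf : MemLinfMinus μ f) : AEStronglyMeasurable f μ :=
  (hf 1 le_rfl (by simp)).1

lemma lm_int {E : Type*} [NormedAddCommGroup E] {f : Ω → E}
    (hf : MemLinfMinus μ f) : Integrable f μ :=
  memLp_one_iff_integrable.mp (hf 1 le_rfl (by simp))

lemma lm_congr {E : Type*} [NormedAddCommGroup E] {f g : Ω → E}
    (hf : MemLinfMinus μ f) (h : f =ᵐ[μ] g) : MemLinfMinus μ g :=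
  fun p hp hpt => (hf p hp hpt).ae_eq h

lemma lm_sub {f g : Ω → ℝ} (hf : MemLinfMinus μ f) (hg : MemLinfMinus μ g) :
    MemLinfMinus μ (fun ω => f ω - g ω) :=
  fun p hp hpt => (hf p hp hpt).sub (hg p hp hpt)

lemma lm_mul {f g : Ω → ℝ} (hf : MemLinfMinus μ f) (hg : MemLinfMinus μ g) :
    MemLinfMinus μ (fun ω => f ω * g ω) := by
  intro p hp hpt
  have h2p1 : (1:ℝ≥0∞) ≤ 2 * p := le_trans hp (le_mul_of_one_le_left (by positivity) one_le_two)
  have h2pt : 2 * p ≠ ⊤ := ENNReal.mul_ne_top (by simp) hpt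
  have hpqr : 1 / p = 1 / (2 * p) + 1 / (2 * p) := by
    rw [ENNReal.div_add_div_same, one_add_one_eq_two,
      show (2:ℝ≥0∞) = 2 * 1 by rw [mul_one], mul_assoc,
      ENNReal.mul_div_mul_left 1 (1 * p) two_ne_zero (by simp), one_mul]
  have := (hf (2 * p) h2p1 h2pt).smul (hg (2 * p) h2p1 h2pt) (hpqr := ⟨by simpa only [one_div] using hpqr.symm⟩)
  simpa [smul_eq_mul, Pi.smul_apply', mul_comm, Pi.mul_def] using this

lemma lm_sum {D : ℕ} {f : Fin D → Ω → ℝ}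
    (hf : ∀ d, MemLinfMinus μ (f d)) :
    MemLinfMinus μ (fun ω => ∑ d, f d ω) := by
  intro p hp hpt
  have : MemLp (∑ d, f d) p μ := memLp_finset_sum' _ (fun d _ => hf d p hp hpt)
  exact this.ae_eq (by filter_upwards with ω; simp)

lemma lm_eval {D : ℕ} {f : Ω → Fin D → ℝ} (hf : MemLinfMinus μ f) (d : Fin D) :
    MemLinfMinus μ (fun ω => f ω d) := by
  intro p hp hpt
  refine MemLp.of_le (hf p hp hpt) ?_ ?_
  · exact (continuous_apply d).comp_aestronglyMeasurable (lm_aesm hf)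
  · filter_upwards with ω using norm_le_pi_norm (f ω) d

lemma young_aux (m : ℕ) {x y : ℝ} (hx : 0 ≤ x) (hy : 0 ≤ y) :
    x ^ m * y ≤ x ^ (m + 1) + y ^ (m + 1) := by
  rcases le_total x y with h | h
  · calc x ^ m * y ≤ y ^ m * y :=
          mul_le_mul_of_nonneg_right (pow_le_pow_left₀ hx h m) hy
    _ = y ^ (m+1) := by ring
    _ ≤ x ^ (m+1) + y ^ (m+1) := le_add_of_nonneg_left (by positivity)
  · calc x ^ m * y ≤ x ^ m * x := mul_le_mul_of_nonneg_left h (by positivity)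
    _ = x ^ (m+1) := by ring
    _ ≤ x ^ (m+1) + y ^ (m+1) := le_add_of_nonneg_right (by positivity)

lemma young_half (m : ℕ) {x y : ℝ} (hx : 0 ≤ x) (hy : 0 ≤ y) :
    x ^ m * y ≤ (1/2) * x ^ (m + 1) + (2:ℝ) ^ (m * (m+1)) * y ^ (m + 1) := by
  have h := young_aux m (x := x / 2) (y := 2 ^ m * y) (by positivity) (by positivity)
  have e1 : (x / 2) ^ m * (2 ^ m * y) = x ^ m * y := by
    rw [div_pow]; field_simp
  have e2 : (x / 2) ^ (m+1) = (1 / 2^(m+1)) * x ^ (m+1) := by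
    rw [div_pow]; ring
  have e3 : ((2:ℝ) ^ m * y) ^ (m+1) = (2:ℝ) ^ (m * (m+1)) * y ^ (m+1) := by
    rw [mul_pow, ← pow_mul]
  rw [e1, e2, e3] at h
  have h4 : (1 / (2:ℝ)^(m+1)) * x ^ (m+1) ≤ (1/2) * x ^ (m+1) := by
    apply mul_le_mul_of_nonneg_right _ (by positivity)
    rw [div_le_div_iff₀ (by positivity) (by positivity)]
    have : (2:ℝ) ≤ 2 ^ (m+1) := by
      calc (2:ℝ) = 2^1 := (pow_one 2).symm
      _ ≤ 2^(m+1) := pow_le_pow_right₀ one_le_two (by omega)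
    linarith
  linarith

theorem memℒp_condexp_of_nat [IsProbabilityMeasure μ]
    {m : MeasurableSpace Ω} (hm : m ≤ m0) {f : Ω → ℝ} (n : ℕ)
    (hf1 : Integrable f μ) (hfn : MemLp f n μ) :
    MemLp (μ[f|m]) n μ := by
  rcases Nat.eq_zero_or_pos n with rfl | hn
  · simpa using memLp_zero_iff_aestronglyMeasurable.mpr
      (stronglyMeasurable_condExp.mono hm).aestronglyMeasurable
  obtain ⟨m', rfl⟩ : ∃ m', n = m' + 1 := ⟨n - 1, by omega⟩
  set g : Ω → ℝ := μ[f|m] with hg_def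
  set h : Ω → ℝ := μ[(fun ω => |f ω|)|m] with hh_def
  have habs : Integrable (fun ω => |f ω|) μ := hf1.abs
  have hg_sm : StronglyMeasurable[m] g := stronglyMeasurable_condExp
  have hg_meas : Measurable[m0] g := (hg_sm.measurable).mono hm le_rfl
  have hg_le_h : ∀ᵐ ω ∂μ, |g ω| ≤ h ω := by
    have h1 : g ≤ᵐ[μ] h := condExp_mono hf1 habs (ae_of_all _ fun ω => le_abs_self _)
    have h2 : μ[(fun ω => -|f ω|)|m] ≤ᵐ[μ] g :=
      condExp_mono habs.neg hf1 (ae_of_all _ fun ω => neg_abs_le _)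
    have h3 : μ[(fun ω => -|f ω|)|m] =ᵐ[μ] fun ω => -h ω := by
      simpa [Pi.neg_def] using condExp_neg (fun ω => |f ω|) (m := m) (μ := μ)
    filter_upwards [h1, h2, h3] with ω e1 e2 e3
    rw [abs_le]; constructor
    · rw [e3] at e2; linarith
    · exact e1
  have hh0 : 0 ≤ᵐ[μ] h := condExp_nonneg (ae_of_all _ fun ω => abs_nonneg _)
  set hk : ℕ → Ω → ℝ := fun k ω => min (|g ω|) k with hhk_def
  have hk_nonneg : ∀ k ω, 0 ≤ hk k ω := fun k ω => le_min (abs_nonneg _) (Nat.cast_nonneg _)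
  have hk_msm : ∀ k, Measurable[m] (hk k) :=
    fun k => (hg_sm.measurable.abs).min (@measurable_const ℝ Ω _ m ((k:ℕ):ℝ))
  have hk_meas : ∀ k, Measurable[m0] (hk k) := fun k => (hk_msm k).mono hm le_rfl
  have hk_le : ∀ k ω, hk k ω ≤ (k:ℝ) := fun k ω => min_le_right _ _
  have hk_bdd : ∀ k i : ℕ, ∀ ω, ‖hk k ω ^ i‖ ≤ (k:ℝ) ^ i := by
    intro k i ω
    rw [Real.norm_eq_abs, abs_of_nonneg (by positivity)]
    exact pow_le_pow_left₀ (hk_nonneg k ω) (hk_le k ω) i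
  have hk_pow_int : ∀ k i : ℕ, Integrable (fun ω => hk k ω ^ i) μ := by
    intro k i
    refine Integrable.mono' (integrable_const ((k:ℝ)^i)) ?_ (ae_of_all _ (hk_bdd k i))
    exact ((hk_meas k).pow_const i).aestronglyMeasurable
  have hfn' : Integrable (fun ω => |f ω| ^ (m' + 1)) μ := by
    have := hfn.integrable_norm_rpow (by simp) (by simp)
    have h2 : ((m' + 1 : ℕ) : ℝ≥0∞).toReal = ((m' + 1 : ℕ) : ℝ) := ENNReal.toReal_natCast _
    refine this.congr (ae_of_all _ fun ω => ?_)
    show ‖f ω‖ ^ ((m' + 1 : ℕ) : ℝ≥0∞).toReal = |f ω| ^ (m' + 1)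
    rw [h2, Real.rpow_natCast, Real.norm_eq_abs]
  set B : ℝ := ∫ ω, |f ω| ^ (m' + 1) ∂μ with hB_def
  set C : ℝ := (2:ℝ) ^ (m' * (m' + 1)) with hC_def
  have hC_pos : 0 < C := by positivity
  have main : ∀ k, ∫ ω, hk k ω ^ (m' + 1) ∂μ ≤ 2 * C * B := by
    intro k
    set a : ℝ := ∫ ω, hk k ω ^ (m' + 1) ∂μ with ha_def
    have int_hkm_h : Integrable (fun ω => hk k ω ^ m' * h ω) μ := by
      refine Integrable.bdd_mul integrable_condExp
        ((hk_meas k).pow_const m').aestronglyMeasurable (ae_of_all _ (hk_bdd k m'))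
    have step1 : a ≤ ∫ ω, hk k ω ^ m' * h ω ∂μ := by
      refine integral_mono_ae (hk_pow_int k (m'+1)) int_hkm_h ?_
      filter_upwards [hg_le_h, hh0] with ω e1 e2
      calc hk k ω ^ (m'+1) = hk k ω ^ m' * hk k ω := by ring
      _ ≤ hk k ω ^ m' * h ω := by
          refine mul_le_mul_of_nonneg_left ?_ (by positivity)
          exact le_trans (min_le_left _ _) e1
    have int_hkm_f : Integrable (fun ω => hk k ω ^ m' * |f ω|) μ :=
      Integrable.bdd_mul habs ((hk_meas k).pow_const m').aestronglyMeasurable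
        (ae_of_all _ (hk_bdd k m'))
    have pull : μ[(fun ω => hk k ω ^ m' * |f ω|)|m]
        =ᵐ[μ] fun ω => hk k ω ^ m' * h ω := by
      have := condExp_mul_of_stronglyMeasurable_left (μ := μ) (((hk_msm k).pow_const m').stronglyMeasurable)
        int_hkm_f habs
      simpa [Pi.mul_def] using this
    have step2 : ∫ ω, hk k ω ^ m' * h ω ∂μ = ∫ ω, hk k ω ^ m' * |f ω| ∂μ := by
      rw [← integral_condExp (μ := μ) (f := fun ω => hk k ω ^ m' * |f ω|) hm]
      exact integral_congr_ae pull.symm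
    have step3 : ∫ ω, hk k ω ^ m' * |f ω| ∂μ ≤ (1/2) * a + C * B := by
      have hint : Integrable (fun ω => (1/2) * hk k ω ^ (m'+1) + C * |f ω| ^ (m'+1)) μ :=
        ((hk_pow_int k (m'+1)).const_mul _).add (hfn'.const_mul _)
      have := integral_mono_ae int_hkm_f hint (ae_of_all _ fun ω =>
        young_half m' (hk_nonneg k ω) (abs_nonneg (f ω)))
      rwa [integral_add ((hk_pow_int k (m'+1)).const_mul _) (hfn'.const_mul _),
        integral_const_mul, integral_const_mul] at this
    linarith
  have hB0 : 0 ≤ B := integral_nonneg fun ω => by positivity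
  constructor
  · exact (hg_sm.mono hm).aestronglyMeasurable
  · rw [eLpNorm_eq_lintegral_rpow_enorm_toReal (by simp) (by simp)]
    refine ENNReal.rpow_lt_top_of_nonneg (by positivity) ?_
    have key : ∫⁻ ω, (ENNReal.ofReal (|g ω|)) ^ (m' + 1) ∂μ ≤ ENNReal.ofReal (2 * C * B) := by
      have pointwise : ∀ ω, (ENNReal.ofReal (|g ω|)) ^ (m'+1)
          = ⨆ k : ℕ, (ENNReal.ofReal (hk k ω)) ^ (m'+1) := by
        intro ω
        apply le_antisymm
        · obtain ⟨k, hkk⟩ := exists_nat_ge (|g ω|)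
          refine le_trans ?_ (le_iSup (fun k => (ENNReal.ofReal (hk k ω)) ^ (m'+1)) k)
          have : hk k ω = |g ω| := min_eq_left hkk
          rw [this]
        · refine iSup_le fun k => ?_
          gcongr
          exact min_le_left _ _
      calc ∫⁻ ω, (ENNReal.ofReal (|g ω|)) ^ (m' + 1) ∂μ
          = ∫⁻ ω, ⨆ k : ℕ, (ENNReal.ofReal (hk k ω)) ^ (m'+1) ∂μ :=
            lintegral_congr fun ω => pointwise ω
        _ = ⨆ k : ℕ, ∫⁻ ω, (ENNReal.ofReal (hk k ω)) ^ (m'+1) ∂μ := by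
            refine lintegral_iSup (fun k => ?_) ?_
            · exact ((hk_meas k).ennreal_ofReal).pow_const _
            · intro i j hij ω
              dsimp only
              gcongr
              exact min_le_min le_rfl (Nat.cast_le.mpr hij)
        _ ≤ ENNReal.ofReal (2 * C * B) := by
            refine iSup_le fun k => ?_
            have conv : ∫⁻ ω, (ENNReal.ofReal (hk k ω)) ^ (m'+1) ∂μ
                = ENNReal.ofReal (∫ ω, hk k ω ^ (m'+1) ∂μ) := by
              rw [ofReal_integral_eq_lintegral_ofReal (hk_pow_int k (m'+1))
                (ae_of_all _ fun ω => by positivity)]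
              exact lintegral_congr fun ω => (ENNReal.ofReal_pow (hk_nonneg k ω) _).symm
            rw [conv]
            exact ENNReal.ofReal_le_ofReal (main k)
    have cast : ∀ ω, ‖g ω‖ₑ ^ (((m' + 1 : ℕ) : ℝ≥0∞).toReal)
        = (ENNReal.ofReal (|g ω|)) ^ (m' + 1) := by
      intro ω
      rw [ENNReal.toReal_natCast, ENNReal.rpow_natCast, ← ofReal_norm_eq_enorm,
        Real.norm_eq_abs]
    refine ne_of_lt ?_
    calc ∫⁻ ω, ‖g ω‖ₑ ^ (((m' + 1 : ℕ) : ℝ≥0∞).toReal) ∂μ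
        = ∫⁻ ω, (ENNReal.ofReal (|g ω|)) ^ (m' + 1) ∂μ := lintegral_congr fun ω => cast ω
      _ ≤ ENNReal.ofReal (2 * C * B) := key
      _ < ⊤ := ENNReal.ofReal_lt_top

lemma lm_condexp [IsProbabilityMeasure μ] {m : MeasurableSpace Ω} (hm : m ≤ m0)
    {f : Ω → ℝ} (hf : MemLinfMinus μ f) : MemLinfMinus μ (μ[f|m]) := by
  intro p hp hpt
  set n : ℕ := ⌈p.toReal⌉₊ + 1 with hn_def
  have hpn : p ≤ (n : ℝ≥0∞) := by
    have h1 : p.toReal ≤ (n:ℝ) := le_trans (Nat.le_ceil _) (by exact_mod_cast Nat.le_succ _)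
    calc p = ENNReal.ofReal p.toReal := (ENNReal.ofReal_toReal hpt).symm
    _ ≤ ENNReal.ofReal (n:ℝ) := ENNReal.ofReal_le_ofReal h1
    _ = (n:ℝ≥0∞) := ENNReal.ofReal_natCast n
  have h1n : (1:ℝ≥0∞) ≤ (n:ℝ≥0∞) := by
    have : (1:ℕ) ≤ n := by omega
    exact_mod_cast this
  exact (memℒp_condexp_of_nat hm n (lm_int hf) (hf n h1n (by simp))).mono_exponent hpn

lemma fenchel {D : ℕ} {f : (Fin D → ℝ) → ℝ} {u : Fin D → ℝ}
    (h : econj f u ≠ ⊤) (z : Fin D → ℝ) : dotp u z - rconj f u ≤ f z := by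
  have h1 : ((dotp u z - f z : ℝ) : EReal) ≤ econj f u :=
    le_iSup (fun z => ((dotp u z - f z : ℝ) : EReal)) z
  have hbot : econj f u ≠ ⊥ := fun hb => by
    rw [hb] at h1; exact (EReal.bot_lt_coe _).not_ge h1
  have h2 : econj f u = ((rconj f u : ℝ) : EReal) := (EReal.coe_toReal h hbot).symm
  rw [h2] at h1
  have := EReal.coe_le_coe_iff.mp h1
  linarith

lemma stronglyMeasurable_rconj {m : MeasurableSpace Ω} {D : ℕ} {F : Ω → (Fin D → ℝ) → ℝ}
    (hFz : ∀ z, StronglyMeasurable[m] fun ω => F ω z)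
    (hconv : ∀ ω, ConvexOn ℝ Set.univ (F ω))
    {r : Ω → Fin D → ℝ} (hr : StronglyMeasurable[m] r) :
    StronglyMeasurable[m] fun ω => rconj (F ω) (r ω) := by
  have hcont : ∀ ω, Continuous (F ω) := by
    intro ω
    have := (hconv ω).continuousOn isOpen_univ
    rwa [← continuousOn_univ]
  have : Nonempty (Fin D → ℝ) := ⟨0⟩
  set e : ℕ → (Fin D → ℝ) := TopologicalSpace.denseSeq (Fin D → ℝ) with he_def
  have hdense : DenseRange e := TopologicalSpace.denseRange_denseSeq _
  have key : ∀ ω, econj (F ω) (r ω)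
      = ⨆ n : ℕ, ((dotp (r ω) (e n) - F ω (e n) : ℝ) : EReal) := by
    intro ω
    apply le_antisymm
    · refine iSup_le fun z => ?_
      have hz : z ∈ closure (Set.range e) := by
        rw [hdense.closure_range]; trivial
      obtain ⟨x, hx_mem, hx_tend⟩ := mem_closure_iff_seq_limit.mp hz
      have hcont2 : Continuous fun z => ((dotp (r ω) z - F ω z : ℝ) : EReal) := by
        refine continuous_coe_real_ereal.comp (Continuous.sub ?_ (hcont ω))
        exact continuous_finset_sum _ fun d _ => (continuous_const.mul (continuous_apply d))
      have htd : Filter.Tendsto (fun k => ((dotp (r ω) (x k) - F ω (x k) : ℝ) : EReal))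
          Filter.atTop (nhds ((dotp (r ω) z - F ω z : ℝ) : EReal)) :=
        (hcont2.tendsto z).comp hx_tend
      refine le_of_tendsto htd (Filter.Eventually.of_forall fun k => ?_)
      obtain ⟨n, hn⟩ := hx_mem k
      rw [← hn]
      exact le_iSup (fun n => ((dotp (r ω) (e n) - F ω (e n) : ℝ) : EReal)) n
    · exact iSup_le fun n => le_iSup (fun z => ((dotp (r ω) z - F ω z : ℝ) : EReal)) (e n)
  have hmeas : Measurable[m] fun ω => econj (F ω) (r ω) := by
    have hterm : ∀ n : ℕ, Measurable[m] fun ω => ((dotp (r ω) (e n) - F ω (e n) : ℝ) : EReal) := by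
      intro n
      refine Measurable.coe_real_ereal (Measurable.sub ?_ (hFz (e n)).measurable)
      exact Finset.measurable_sum _ fun d _ =>
        ((hr.measurable.eval).mul (@measurable_const ℝ Ω _ m _))
    have h2 := Measurable.iSup hterm
    have h3 : (fun ω => econj (F ω) (r ω))
        = fun ω => ⨆ n : ℕ, ((dotp (r ω) (e n) - F ω (e n) : ℝ) : EReal) := funext key
    rw [h3]
    exact h2
  exact (hmeas.ereal_toReal).stronglyMeasurable

lemma martingale_comp_condexp [IsProbabilityMeasure μ]
    {ℱ : Filtration ℕ m0} {D : ℕ} {M : ℕ → Ω → Fin D → ℝ}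
    (hM : Martingale M ℱ μ) (j : ℕ) (d : Fin D) :
    μ[(fun ω => M (j + 1) ω d)|ℱ j] =ᵐ[μ] fun ω => M j ω d := by
  have hint : ∀ i, Integrable (fun ω => M i ω d) μ := by
    intro i
    have := (ContinuousLinearMap.proj (R := ℝ) (φ := fun _ : Fin D => ℝ) d).integrable_comp
      (hM.integrable i)
    simpa using this
  refine (ae_eq_condExp_of_forall_setIntegral_eq (ℱ.le j) (hint (j+1))
    (fun s _ _ => (hint j).integrableOn) (fun s hs _ => ?_) ?_).symm
  · have hvec := hM.setIntegral_eq (Nat.le_succ j) hs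
    have h1 := (ContinuousLinearMap.proj (R := ℝ) (φ := fun _ : Fin D => ℝ) d).integral_comp_comm
      ((hM.integrable j).integrableOn (s := s))
    have h2 := (ContinuousLinearMap.proj (R := ℝ) (φ := fun _ : Fin D => ℝ) d).integral_comp_comm
      ((hM.integrable (j+1)).integrableOn (s := s))
    simp only [ContinuousLinearMap.proj_apply] at h1 h2
    rw [h1, h2, hvec]
  · exact ((continuous_apply d).comp_stronglyMeasurable (hM.stronglyAdapted j)).aestronglyMeasurable

end SubsolAux

/-- Subsolution construction: for any `M ∈ M_D` and `r ∈ A_0`, the process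
`Y^{low}_j := E_j[θ^{low}_j(r,M)]` is a subsolution to the dynamic program; in particular
`Y^{low}_j = r_j^⊤ E_j[β_{j+1} θ^{low}_{j+1}] − F_j^{#}(r_j) ≤ F_j(E_j[β_{j+1} Y^{low}_{j+1}])`
`P`-a.s. for every `j = 0,…,J-1`. -/
theorem subsolution_construction
    (μ : Measure Ω) [IsProbabilityMeasure μ] (ℱ : Filtration ℕ m0)
    (J D : ℕ) (F : ℕ → Ω → (Fin D → ℝ) → ℝ) (β : ℕ → Ω → Fin D → ℝ) (ξ : Ω → ℝ)
    (hset : Setting μ ℱ J D F β ξ)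
    (M : ℕ → Ω → Fin D → ℝ) (hM : IsMartD μ ℱ M)
    (r : ℕ → Ω → Fin D → ℝ) (hr : IsAdmissibleFrom μ ℱ 0 J D F r)
    (θ : ℕ → Ω → ℝ) (hθ : IsThetaLowFrom μ 0 J D F β ξ r M θ) :
    IsSubsolution μ ℱ J D F β ξ (fun j => μ[θ j|ℱ j]) ∧
    ∀ j < J, ∀ᵐ ω ∂μ,
      (μ[θ j|ℱ j]) ω
          = dotp (r j ω) (cexpV μ (ℱ j) (bprod β θ (j + 1)) ω) - rconj (F j ω) (r j ω) ∧
      (μ[θ j|ℱ j]) ω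
          ≤ F j ω (cexpV μ (ℱ j) (bprod β (fun i => μ[θ i|ℱ i]) (j + 1)) ω) := by
  classical
  open SubsolAux in
  have hβd : ∀ j, j ≤ J → ∀ d : Fin D, MemLinfMinus μ (fun ω => β j ω d) :=
    fun j hj d => lm_eval (hset.β_int j hj) d
  have hMd : ∀ j, ∀ d : Fin D, MemLinfMinus μ (fun ω => M j ω d) :=
    fun j d => lm_eval (hM.2 j) d
  have hrd : ∀ j, j < J → ∀ d : Fin D, MemLinfMinus μ (fun ω => r j ω d) :=
    fun j hj d => lm_eval (hr j (Nat.zero_le _) hj).2.1 d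
  -- θ is in L^{∞-} for indices ≤ J
  have hθmem : ∀ j, j ≤ J → MemLinfMinus μ (θ j) := by
    have Hrec : ∀ n : ℕ, ∀ j, J - j = n → j ≤ J → MemLinfMinus μ (θ j) := by
      intro n
      induction n with
      | zero =>
        intro j hj0 hjJ
        have hjeq : j = J := by omega
        subst hjeq
        exact lm_congr hset.ξ_int (Filter.EventuallyEq.symm hθ.1)
      | succ n ih =>
        intro j hj hjJ
        have hjJ' : j < J := by omega
        have hnext := ih (j + 1) (by omega) (by omega)
        have hexpr : MemLinfMinus μ (fun ω =>
            (∑ d, r j ω d * (β (j+1) ω d * θ (j+1) ω))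
            - (∑ d, r j ω d * (M (j+1) ω d - M j ω d)) - rconj (F j ω) (r j ω)) := by
          refine lm_sub (lm_sub ?_ ?_) (hr j (Nat.zero_le _) hjJ').2.2.2
          · exact lm_sum fun d => lm_mul (hrd j hjJ' d)
              (lm_mul (hβd (j+1) (by omega) d) hnext)
          · exact lm_sum fun d => lm_mul (hrd j hjJ' d)
              (lm_sub (hMd (j+1) d) (hMd j d))
        refine lm_congr hexpr ?_
        filter_upwards [hθ.2 j (Nat.zero_le _) hjJ'] with ω e
        rw [e]; simp [dotp]
    exact fun j hj => Hrec (J - j) j rfl hj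
  -- the main per-index computation
  have main : ∀ j, j < J →
      (μ[θ j|ℱ j] =ᵐ[μ] fun ω =>
        dotp (r j ω) (cexpV μ (ℱ j) (bprod β θ (j+1)) ω) - rconj (F j ω) (r j ω))
      ∧ (∀ᵐ ω ∂μ, cexpV μ (ℱ j) (bprod β θ (j+1)) ω
          = cexpV μ (ℱ j) (bprod β (fun i => μ[θ i|ℱ i]) (j+1)) ω) := by
    intro j hj
    have hj1 : j + 1 ≤ J := hj
    have hrj := hr j (Nat.zero_le _) hj
    have hθnext := hθmem (j+1) hj1
    have hbθ : ∀ d : Fin D, MemLinfMinus μ (fun ω => β (j+1) ω d * θ (j+1) ω) :=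
      fun d => lm_mul (hβd (j+1) hj1 d) hθnext
    have hA_d : ∀ d : Fin D, MemLinfMinus μ (fun ω => r j ω d * (β (j+1) ω d * θ (j+1) ω)) :=
      fun d => lm_mul (hrd j hj d) (hbθ d)
    have hB_d : ∀ d : Fin D, MemLinfMinus μ (fun ω => r j ω d * (M (j+1) ω d - M j ω d)) :=
      fun d => lm_mul (hrd j hj d) (lm_sub (hMd (j+1) d) (hMd j d))
    have hC_mem := hrj.2.2.2
    set A : Ω → ℝ := fun ω => ∑ d, r j ω d * (β (j+1) ω d * θ (j+1) ω) with hA_def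
    set Bf : Ω → ℝ := fun ω => ∑ d, r j ω d * (M (j+1) ω d - M j ω d) with hBf_def
    set Cf : Ω → ℝ := fun ω => rconj (F j ω) (r j ω) with hCf_def
    have hA_int : Integrable A μ := lm_int (lm_sum hA_d)
    have hB_int : Integrable Bf μ := lm_int (lm_sum hB_d)
    have hC_int : Integrable Cf μ := lm_int hC_mem
    have hrd_sm : ∀ d : Fin D, StronglyMeasurable[ℱ j] (fun ω => r j ω d) :=
      fun d => (continuous_apply d).comp_stronglyMeasurable hrj.1
    -- conditional expectation of A
    have hAcond : μ[A|ℱ j] =ᵐ[μ] fun ω =>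
        ∑ d, r j ω d * cexpV μ (ℱ j) (bprod β θ (j+1)) ω d := by
      have hsum0 : A =ᵐ[μ] ∑ d, (fun ω => r j ω d * (β (j+1) ω d * θ (j+1) ω)) := by
        filter_upwards with ω
        rw [Finset.sum_apply]
      have hsum := condExp_finsetSum (μ := μ) (m := ℱ j)
        (f := fun (d : Fin D) (ω : Ω) => r j ω d * (β (j+1) ω d * θ (j+1) ω))
        (s := Finset.univ) (fun d _ => lm_int (hA_d d))
      have hpull : ∀ᵐ ω ∂μ, ∀ d : Fin D,
          (μ[(fun ω => r j ω d * (β (j+1) ω d * θ (j+1) ω))|ℱ j]) ω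
          = r j ω d * cexpV μ (ℱ j) (bprod β θ (j+1)) ω d := by
        rw [ae_all_iff]
        intro d
        have := condExp_mul_of_stronglyMeasurable_left (μ := μ) (hrd_sm d)
          (lm_int (hA_d d)) (lm_int (hbθ d))
        filter_upwards [this] with ω e
        exact e
      filter_upwards [(condExp_congr_ae hsum0).trans hsum, hpull] with ω e1 e2
      rw [e1, Finset.sum_apply]
      exact Finset.sum_congr rfl fun d _ => e2 d
    -- conditional expectation of Bf is 0
    have hBcond : μ[Bf|ℱ j] =ᵐ[μ] fun _ => (0:ℝ) := by
      have hsum0 : Bf =ᵐ[μ] ∑ d, (fun ω => r j ω d * (M (j+1) ω d - M j ω d)) := by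
        filter_upwards with ω
        rw [Finset.sum_apply]
      have hsum := condExp_finsetSum (μ := μ) (m := ℱ j)
        (f := fun (d : Fin D) (ω : Ω) => r j ω d * (M (j+1) ω d - M j ω d))
        (s := Finset.univ) (fun d _ => lm_int (hB_d d))
      have hzero : ∀ᵐ ω ∂μ, ∀ d : Fin D,
          (μ[(fun ω => r j ω d * (M (j+1) ω d - M j ω d))|ℱ j]) ω = 0 := by
        rw [ae_all_iff]
        intro d
        have hpull := condExp_mul_of_stronglyMeasurable_left (μ := μ) (hrd_sm d)
          (lm_int (hB_d d)) (lm_int (lm_sub (hMd (j+1) d) (hMd j d)))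
        have hdm : μ[(fun ω => M (j+1) ω d - M j ω d)|ℱ j]
            =ᵐ[μ] μ[(fun ω => M (j+1) ω d)|ℱ j] - μ[(fun ω => M j ω d)|ℱ j] := by
          refine Filter.EventuallyEq.trans (condExp_congr_ae ?_)
            (condExp_sub (μ := μ) (m := ℱ j)
              (f := fun ω => M (j+1) ω d) (g := fun ω => M j ω d)
              (lm_int (hMd (j+1) d)) (lm_int (hMd j d)))
          filter_upwards with ω
          simp
        have hmart := martingale_comp_condexp hM.1 j d
        have hadap : μ[(fun ω => M j ω d)|ℱ j] = fun ω => M j ω d :=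
          condExp_of_stronglyMeasurable (ℱ.le j)
            ((continuous_apply d).comp_stronglyMeasurable (hM.1.stronglyAdapted j))
            (lm_int (hMd j d))
        filter_upwards [hpull, hdm, hmart] with ω e1 e2 e3
        have e4 : (μ[(fun ω => M (j+1) ω d - M j ω d)|ℱ j]) ω = 0 := by
          rw [e2]
          simp only [Pi.sub_apply]
          rw [e3, hadap]
          ring
        have e1' : (μ[(fun ω => r j ω d * (M (j+1) ω d - M j ω d))|ℱ j]) ω
            = r j ω d * (μ[(fun ω => M (j+1) ω d - M j ω d)|ℱ j]) ω := e1
        rw [e1', e4]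
        ring
      filter_upwards [(condExp_congr_ae hsum0).trans hsum, hzero] with ω e1 e2
      rw [e1, Finset.sum_apply]
      exact Finset.sum_eq_zero fun d _ => e2 d
    -- conditional expectation of Cf
    have hCcond : μ[Cf|ℱ j] = Cf :=
      condExp_of_stronglyMeasurable (ℱ.le j)
        (stronglyMeasurable_rconj (fun z => hset.F_adapted j hj z)
          (hset.F_convex j hj) hrj.1) hC_int
    -- decompose θ j
    have h0 : θ j =ᵐ[μ] fun ω => A ω - Bf ω - Cf ω := by
      filter_upwards [hθ.2 j (Nat.zero_le _) hj] with ω e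
      rw [e]; simp [dotp, hA_def, hBf_def, hCf_def]
    have e1 : μ[θ j|ℱ j] =ᵐ[μ] μ[(A - Bf) - Cf|ℱ j] := by
      refine condExp_congr_ae (h0.trans ?_)
      filter_upwards with ω
      simp
    have e2 := condExp_sub (μ := μ) (m := ℱ j) (hA_int.sub hB_int) hC_int
    have e3 := condExp_sub (μ := μ) (m := ℱ j) hA_int hB_int
    have E1 : μ[θ j|ℱ j] =ᵐ[μ] fun ω =>
        dotp (r j ω) (cexpV μ (ℱ j) (bprod β θ (j+1)) ω) - rconj (F j ω) (r j ω) := by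
      filter_upwards [e1, e2, e3, hAcond, hBcond] with ω f1 f2 f3 f4 f5
      rw [f1, f2]
      simp only [Pi.sub_apply]
      rw [f3]
      simp only [Pi.sub_apply]
      rw [f4, f5, hCcond]
      simp only [hCf_def]
      show _ = (∑ d, r j ω d * cexpV μ (ℱ j) (bprod β θ (j+1)) ω d) - rconj (F j ω) (r j ω)
      ring
    refine ⟨E1, ?_⟩
    -- tower property for the weighted conditional expectations
    have E2 : ∀ᵐ ω ∂μ, ∀ d : Fin D, cexpV μ (ℱ j) (bprod β θ (j+1)) ω d
        = cexpV μ (ℱ j) (bprod β (fun i => μ[θ i|ℱ i]) (j+1)) ω d := by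
      rw [ae_all_iff]
      intro d
      have t1 : μ[(fun ω => β (j+1) ω d * θ (j+1) ω)|ℱ j]
          =ᵐ[μ] μ[μ[(fun ω => β (j+1) ω d * θ (j+1) ω)|ℱ (j+1)]|ℱ j] :=
        (condExp_condExp_of_le (ℱ.mono (Nat.le_succ j)) (ℱ.le (j+1))).symm
      have t2 : μ[(fun ω => β (j+1) ω d * θ (j+1) ω)|ℱ (j+1)]
          =ᵐ[μ] fun ω => β (j+1) ω d * (μ[θ (j+1)|ℱ (j+1)]) ω := by
        have := condExp_mul_of_stronglyMeasurable_left (μ := μ)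
          ((continuous_apply d).comp_stronglyMeasurable (hset.β_adapted (j+1) hj1))
          (lm_int (hbθ d)) (lm_int hθnext)
        filter_upwards [this] with ω e
        exact e
      have t3 := (t1.trans (condExp_congr_ae t2))
      filter_upwards [t3] with ω e
      exact e
    exact E2.mono fun ω h => funext h
  -- assemble
  refine ⟨⟨fun j hj => ⟨stronglyMeasurable_condExp, lm_condexp (ℱ.le j) (hθmem j hj)⟩,
      ?_, ?_⟩, ?_⟩
  · -- terminal condition
    have hterm : μ[θ J|ℱ J] =ᵐ[μ] ξ := by
      refine (condExp_congr_ae hθ.1).trans ?_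
      rw [condExp_of_stronglyMeasurable (ℱ.le J) hset.ξ_meas (lm_int hset.ξ_int)]
    filter_upwards [hterm] with ω e
    exact le_of_eq e
  · -- subsolution inequality
    intro j hj
    obtain ⟨E1, E2⟩ := main j hj
    filter_upwards [E1, E2, (hr j (Nat.zero_le _) hj).2.2.1] with ω f1 f2 f3
    show (μ[θ j|ℱ j]) ω ≤ F j ω (cexpV μ (ℱ j) (bprod β (fun i => μ[θ i|ℱ i]) (j+1)) ω)
    rw [f1, ← f2]
    exact fenchel f3 _
  · intro j hj
    obtain ⟨E1, E2⟩ := main j hj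
    filter_upwards [E1, E2, (hr j (Nat.zero_le _) hj).2.2.1] with ω f1 f2 f3
    refine ⟨f1, ?_⟩
    rw [f1, ← f2]
    exact fenchel f3 _

end
end

section
/- Independence of the control variate: for fixed r ∈ A_0 and any two martingales M, M' ∈ M_D, E_j[θ^{low}_j(r,M)] = E_j[θ^{low}_j(r,M')] P-a.s. for every j = 0,...,J; i.e. the conditional expectation E_j[θ^{low}_j(r,M)] does not depend on the choice of the martingale M. -/
open MeasureTheory
open scoped ENNReal

noncomputable section

variable {Ω : Type*} {m0 : MeasurableSpace Ω}

section AuxLemmas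

variable {μ : Measure Ω}

lemma MemLinfMinus.integrable' {E : Type*} [NormedAddCommGroup E] {f : Ω → E}
    (hf : MemLinfMinus μ f) : Integrable f μ :=
  memLp_one_iff_integrable.mp (hf 1 le_rfl (by simp))

lemma MemLinfMinus.congr' {E : Type*} [NormedAddCommGroup E] {f g : Ω → E}
    (hf : MemLinfMinus μ f) (h : f =ᵐ[μ] g) : MemLinfMinus μ g :=
  fun p hp hp' => (hf p hp hp').ae_eq h

lemma MemLinfMinus.mul' {f g : Ω → ℝ} (hf : MemLinfMinus μ f) (hg : MemLinfMinus μ g) :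
    MemLinfMinus μ (fun ω => f ω * g ω) := by
  intro p hp hptop
  have h2 : (1 : ℝ≥0∞) ≤ 2 * p := le_trans hp (by
    calc p = 1 * p := (one_mul p).symm
    _ ≤ 2 * p := by gcongr; norm_num)
  have h2t : (2 : ℝ≥0∞) * p ≠ ⊤ := ENNReal.mul_ne_top (by norm_num) hptop
  have hpq : 1 / p = 1 / (2 * p) + 1 / (2 * p) := by
    rw [ENNReal.div_add_div_same]
    have : (1 : ℝ≥0∞) + 1 = 2 := by norm_num
    rw [this]
    rw [show (2 : ℝ≥0∞) = 2 * 1 by norm_num, mul_assoc, one_mul,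
      ENNReal.mul_div_mul_left _ _ (by norm_num) (by norm_num)]
  exact (hg (2*p) h2 h2t).smul (hf (2*p) h2 h2t) (hpqr := ⟨by simpa only [one_div] using hpq.symm⟩)

lemma MemLinfMinus.eval' {D : ℕ} {f : Ω → Fin D → ℝ} (hf : MemLinfMinus μ f) (d : Fin D) :
    MemLinfMinus μ (fun ω => f ω d) := by
  intro p hp hp'
  refine MemLp.of_le (hf p hp hp')
    ((continuous_apply d).comp_aestronglyMeasurable (hf p hp hp').1) ?_
  exact Filter.Eventually.of_forall fun ω => norm_le_pi_norm (f ω) d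

lemma memLinfMinus_sum' {ι : Type*} (s : Finset ι) {g : ι → Ω → ℝ}
    (h : ∀ i ∈ s, MemLinfMinus μ (g i)) : MemLinfMinus μ (fun ω => ∑ i ∈ s, g i ω) :=
  fun p hp hp' => by
    have h2 := memLp_finset_sum' s (fun i hi => h i hi p hp hp')
    have h3 : (∑ i ∈ s, g i) = fun ω => ∑ i ∈ s, g i ω := by funext ω; simp
    rwa [h3] at h2

lemma MemLinfMinus.sub' {f g : Ω → ℝ} (hf : MemLinfMinus μ f) (hg : MemLinfMinus μ g) :
    MemLinfMinus μ (fun ω => f ω - g ω) :=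
  fun p hp hp' => (hf p hp hp').sub (hg p hp hp')

lemma integrable_eval' {D : ℕ} {f : Ω → Fin D → ℝ} (hf : Integrable f μ) (d : Fin D) :
    Integrable (fun ω => f ω d) μ := by
  have := (ContinuousLinearMap.proj (R := ℝ) (φ := fun _ : Fin D => ℝ) d).integrable_comp hf
  simpa using this

end AuxLemmas

lemma integral_eval' {Ω' : Type*} {m0' : MeasurableSpace Ω'} {μ : Measure Ω'}
    {D : ℕ} {f : Ω' → Fin D → ℝ} (hf : Integrable f μ) (d : Fin D) :
    ∫ ω, f ω d ∂μ = (∫ ω, f ω ∂μ) d := by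
  have := (ContinuousLinearMap.proj (R := ℝ) (φ := fun _ : Fin D => ℝ) d).integral_comp_comm hf
  simpa using this

lemma condexp_eval' {Ω' : Type*} {m m0' : MeasurableSpace Ω'} {μ : Measure Ω'}
    (hm : m ≤ m0') [SigmaFinite (μ.trim hm)]
    {D : ℕ} {f : Ω' → Fin D → ℝ} (hf : Integrable f μ) (d : Fin D) :
    (fun ω => (μ[f|m]) ω d) =ᵐ[μ] μ[fun ω => f ω d|m] := by
  have hic := integrable_condExp (μ := μ) (m := m) (f := f)
  refine ae_eq_condExp_of_forall_setIntegral_eq hm (integrable_eval' hf d)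
    (fun s _ _ => (integrable_eval' hic d).integrableOn) ?_
    (((continuous_apply d).comp_stronglyMeasurable (stronglyMeasurable_condExp (f := f) (m := m) (μ := μ))).aestronglyMeasurable)
  intro s hs _
  have h1 : ∫ ω in s, (μ[f|m]) ω ∂μ = ∫ ω in s, f ω ∂μ := setIntegral_condExp hm hf hs
  rw [integral_eval' (μ := μ.restrict s) hic.integrableOn d,
    integral_eval' (μ := μ.restrict s) hf.integrableOn d, h1]


/-- Independence of the control variate: for a fixed admissible control
`r ∈ A_0` and any two martingales `M, M' ∈ M_D`,
`E_j[θ^{low}_j(r,M)] = E_j[θ^{low}_j(r,M')]` `P`-a.s. for every `j = 0,…,J`. -/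
theorem thetaLow_condexp_independent_of_martingale
    (μ : Measure Ω) [IsProbabilityMeasure μ] (ℱ : Filtration ℕ m0)
    (J D : ℕ) (F : ℕ → Ω → (Fin D → ℝ) → ℝ) (β : ℕ → Ω → Fin D → ℝ) (ξ : Ω → ℝ)
    (hset : Setting μ ℱ J D F β ξ)
    (r : ℕ → Ω → Fin D → ℝ) (hr : IsAdmissibleFrom μ ℱ 0 J D F r)
    (M M' : ℕ → Ω → Fin D → ℝ) (hM : IsMartD μ ℱ M) (hM' : IsMartD μ ℱ M')
    (θ θ' : ℕ → Ω → ℝ)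
    (hθ : IsThetaLowFrom μ 0 J D F β ξ r M θ)
    (hθ' : IsThetaLowFrom μ 0 J D F β ξ r M' θ') :
    ∀ j ≤ J, (μ[θ j|ℱ j]) =ᵐ[μ] (μ[θ' j|ℱ j]) := by
  have key : ∀ n : ℕ, ∀ j : ℕ, j + n = J →
      MemLinfMinus μ (θ j) ∧ MemLinfMinus μ (θ' j) ∧ (μ[θ j|ℱ j]) =ᵐ[μ] (μ[θ' j|ℱ j]) := by
    intro n
    induction n with
    | zero =>
      intro j hj
      have hjJ : j = J := by omega
      subst hjJ
      have e1 : θ j =ᵐ[μ] ξ := hθ.1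
      have e1' : θ' j =ᵐ[μ] ξ := hθ'.1
      exact ⟨hset.ξ_int.congr' e1.symm, hset.ξ_int.congr' e1'.symm,
        condExp_congr_ae (e1.trans e1'.symm)⟩
    | succ n ih =>
      intro j hjn
      have hjJ : j < J := by omega
      obtain ⟨hIθ, hIθ', hce⟩ := ih (j + 1) (by omega)
      obtain ⟨hrm, hrint, -, hCint⟩ := hr j (Nat.zero_le _) hjJ
      have hj1J : j + 1 ≤ J := hjJ
      have hle : ℱ j ≤ ℱ (j + 1) := ℱ.mono (Nat.le_succ j)
      have hrmd : ∀ d : Fin D, StronglyMeasurable[ℱ j] fun ω => r j ω d := fun d =>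
        (continuous_apply d).comp_stronglyMeasurable hrm
      have hβmd : ∀ d : Fin D, StronglyMeasurable[ℱ (j+1)] fun ω => β (j+1) ω d := fun d =>
        (continuous_apply d).comp_stronglyMeasurable (hset.β_adapted (j+1) hj1J)
      have hgsm : ∀ d : Fin D, StronglyMeasurable[ℱ (j+1)] fun ω => r j ω d * β (j+1) ω d :=
        fun d => ((hrmd d).mono hle).mul (hβmd d)
      have main : ∀ (MM : ℕ → Ω → Fin D → ℝ) (ψ : ℕ → Ω → ℝ),
          IsMartD μ ℱ MM →
          (∀ᵐ ω ∂μ, ψ j ω = dotp (r j ω) (fun d => β (j+1) ω d * ψ (j+1) ω)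
            - dotp (r j ω) (fun d => MM (j+1) ω d - MM j ω d) - rconj (F j ω) (r j ω)) →
          MemLinfMinus μ (ψ (j+1)) →
          MemLinfMinus μ (ψ j) ∧
          μ[ψ j|ℱ j] =ᵐ[μ]
            (∑ d : Fin D, μ[fun ω => (r j ω d * β (j+1) ω d) * (μ[ψ (j+1)|ℱ (j+1)]) ω|ℱ j])
              - μ[fun ω => rconj (F j ω) (r j ω)|ℱ j] := by
        intro MM ψ hMM hrecψ hψ
        have hAL : MemLinfMinus μ (fun ω => ∑ d : Fin D, r j ω d * (β (j+1) ω d * ψ (j+1) ω)) :=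
          memLinfMinus_sum' Finset.univ
            (fun d _ => (hrint.eval' d).mul' (((hset.β_int (j+1) hj1J).eval' d).mul' hψ))
        have hBL : MemLinfMinus μ (fun ω => ∑ d : Fin D, r j ω d * (MM (j+1) ω d - MM j ω d)) :=
          memLinfMinus_sum' Finset.univ
            (fun d _ => (hrint.eval' d).mul' (((hMM.2 (j+1)).eval' d).sub' ((hMM.2 j).eval' d)))
        have hrec2 : ψ j =ᵐ[μ] fun ω =>
            (∑ d : Fin D, r j ω d * (β (j+1) ω d * ψ (j+1) ω))
              - (∑ d : Fin D, r j ω d * (MM (j+1) ω d - MM j ω d))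
              - rconj (F j ω) (r j ω) := by
          filter_upwards [hrecψ] with ω h
          simpa [dotp] using h
        have hψjL : MemLinfMinus μ (ψ j) := ((hAL.sub' hBL).sub' hCint).congr' hrec2.symm
        refine ⟨hψjL, ?_⟩
        have h0 : μ[ψ j|ℱ j] =ᵐ[μ] μ[fun ω =>
            (∑ d : Fin D, r j ω d * (β (j+1) ω d * ψ (j+1) ω))
              - (∑ d : Fin D, r j ω d * (MM (j+1) ω d - MM j ω d))
              - rconj (F j ω) (r j ω)|ℱ j] := condExp_congr_ae hrec2
        have h1 : μ[fun ω =>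
            (∑ d : Fin D, r j ω d * (β (j+1) ω d * ψ (j+1) ω))
              - (∑ d : Fin D, r j ω d * (MM (j+1) ω d - MM j ω d))
              - rconj (F j ω) (r j ω)|ℱ j] =ᵐ[μ]
            μ[fun ω => (∑ d : Fin D, r j ω d * (β (j+1) ω d * ψ (j+1) ω))
              - (∑ d : Fin D, r j ω d * (MM (j+1) ω d - MM j ω d))|ℱ j]
              - μ[fun ω => rconj (F j ω) (r j ω)|ℱ j] :=
          condExp_sub ((hAL.sub' hBL).integrable') hCint.integrable' (ℱ j)
        have h2 : μ[fun ω => (∑ d : Fin D, r j ω d * (β (j+1) ω d * ψ (j+1) ω))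
              - (∑ d : Fin D, r j ω d * (MM (j+1) ω d - MM j ω d))|ℱ j] =ᵐ[μ]
            μ[fun ω => ∑ d : Fin D, r j ω d * (β (j+1) ω d * ψ (j+1) ω)|ℱ j]
              - μ[fun ω => ∑ d : Fin D, r j ω d * (MM (j+1) ω d - MM j ω d)|ℱ j] :=
          condExp_sub hAL.integrable' hBL.integrable' (ℱ j)
        have hterm0 : ∀ d : Fin D,
            μ[fun ω => r j ω d * (MM (j+1) ω d - MM j ω d)|ℱ j] =ᵐ[μ] 0 := by
          intro d
          have hΔL : MemLinfMinus μ (fun ω => MM (j+1) ω d - MM j ω d) :=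
            ((hMM.2 (j+1)).eval' d).sub' ((hMM.2 j).eval' d)
          have hpull := condExp_mul_of_stronglyMeasurable_left (m := ℱ j) (μ := μ) (hrmd d)
            ((hrint.eval' d).mul' hΔL).integrable' hΔL.integrable'
          have hΔ0 : μ[fun ω => MM (j+1) ω d - MM j ω d|ℱ j] =ᵐ[μ] 0 := by
            have hs := condExp_sub (μ := μ) (m := ℱ j)
              ((hMM.2 (j+1)).eval' d).integrable' ((hMM.2 j).eval' d).integrable'
            have hm1 : μ[fun ω => MM (j+1) ω d|ℱ j] =ᵐ[μ] fun ω => MM j ω d := by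
              have hev : (fun ω => (μ[MM (j+1)|ℱ j]) ω d) =ᵐ[μ] μ[fun ω => MM (j+1) ω d|ℱ j] :=
                condexp_eval' (ℱ.le j) (hMM.2 (j+1)).integrable' d
              have hmg : μ[MM (j+1)|ℱ j] =ᵐ[μ] MM j := hMM.1.2 j (j+1) (Nat.le_succ j)
              refine hev.symm.trans ?_
              filter_upwards [hmg] with ω h
              simpa using congrFun h d
            have hm2 : μ[fun ω => MM j ω d|ℱ j] = fun ω => MM j ω d :=
              condExp_of_stronglyMeasurable (ℱ.le j)
                ((continuous_apply d).comp_stronglyMeasurable (hMM.1.1 j))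
                ((hMM.2 j).eval' d).integrable'
            refine hs.trans ?_
            rw [hm2]
            filter_upwards [hm1] with ω h
            simp [h]
          refine hpull.trans ?_
          filter_upwards [hΔ0] with ω h
          simp only [Pi.mul_apply, Pi.zero_apply] at h ⊢
          rw [h, mul_zero]
        have htermA : ∀ d : Fin D,
            μ[fun ω => r j ω d * (β (j+1) ω d * ψ (j+1) ω)|ℱ j]
              =ᵐ[μ] μ[fun ω => (r j ω d * β (j+1) ω d) * (μ[ψ (j+1)|ℱ (j+1)]) ω|ℱ j] := by
          intro d
          have hgψ : Integrable (fun ω => (fun ω => r j ω d * β (j+1) ω d) ω * ψ (j+1) ω) μ :=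
            (((hrint.eval' d).mul' ((hset.β_int (j+1) hj1J).eval' d)).mul' hψ).integrable'
          have hpull := condExp_mul_of_stronglyMeasurable_left (m := ℱ (j+1)) (μ := μ) (hgsm d)
            hgψ hψ.integrable'
          have htower := (condExp_condExp_of_le (m₁ := ℱ j) (m₂ := ℱ (j+1)) hle (ℱ.le (j+1))
            (f := fun ω => (r j ω d * β (j+1) ω d) * ψ (j+1) ω) (μ := μ)).symm
          have hassoc : (fun ω => r j ω d * (β (j+1) ω d * ψ (j+1) ω)) =ᵐ[μ]
              (fun ω => (r j ω d * β (j+1) ω d) * ψ (j+1) ω) :=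
            Filter.Eventually.of_forall fun ω => (mul_assoc _ _ _).symm
          calc μ[fun ω => r j ω d * (β (j+1) ω d * ψ (j+1) ω)|ℱ j]
              =ᵐ[μ] μ[fun ω => (r j ω d * β (j+1) ω d) * ψ (j+1) ω|ℱ j] :=
                condExp_congr_ae hassoc
            _ =ᵐ[μ] μ[μ[fun ω => (r j ω d * β (j+1) ω d) * ψ (j+1) ω|ℱ (j+1)]|ℱ j] := htower
            _ =ᵐ[μ] μ[fun ω => (r j ω d * β (j+1) ω d) * (μ[ψ (j+1)|ℱ (j+1)]) ω|ℱ j] := by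
                refine condExp_congr_ae ?_
                filter_upwards [hpull] with ω h
                exact h
        have hAsum : μ[fun ω => ∑ d : Fin D, r j ω d * (β (j+1) ω d * ψ (j+1) ω)|ℱ j] =ᵐ[μ]
            ∑ d : Fin D, μ[fun ω => r j ω d * (β (j+1) ω d * ψ (j+1) ω)|ℱ j] := by
          have hAeq : (fun ω => ∑ d : Fin D, r j ω d * (β (j+1) ω d * ψ (j+1) ω))
              = ∑ d : Fin D, (fun ω => r j ω d * (β (j+1) ω d * ψ (j+1) ω)) := by
            funext ω; simp
          rw [hAeq]
          exact condExp_finsetSum (fun d _ =>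
            ((hrint.eval' d).mul' (((hset.β_int (j+1) hj1J).eval' d).mul' hψ)).integrable') (ℱ j)
        have hBsum : μ[fun ω => ∑ d : Fin D, r j ω d * (MM (j+1) ω d - MM j ω d)|ℱ j]
            =ᵐ[μ] 0 := by
          have hBeq : (fun ω => ∑ d : Fin D, r j ω d * (MM (j+1) ω d - MM j ω d))
              = ∑ d : Fin D, (fun ω => r j ω d * (MM (j+1) ω d - MM j ω d)) := by
            funext ω; simp
          rw [hBeq]
          refine (condExp_finsetSum (fun d _ => ((hrint.eval' d).mul'
            (((hMM.2 (j+1)).eval' d).sub' ((hMM.2 j).eval' d))).integrable') (ℱ j)).trans ?_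
          have hall : ∀ᵐ ω ∂μ, ∀ d : Fin D,
              (μ[fun ω => r j ω d * (MM (j+1) ω d - MM j ω d)|ℱ j]) ω = 0 :=
            ae_all_iff.mpr fun d => hterm0 d
          filter_upwards [hall] with ω h
          simp only [Finset.sum_apply, Pi.zero_apply]
          exact Finset.sum_eq_zero fun d _ => h d
        have hAllA : ∀ᵐ ω ∂μ, ∀ d : Fin D,
            (μ[fun ω => r j ω d * (β (j+1) ω d * ψ (j+1) ω)|ℱ j]) ω
              = (μ[fun ω => (r j ω d * β (j+1) ω d) * (μ[ψ (j+1)|ℱ (j+1)]) ω|ℱ j]) ω :=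
          ae_all_iff.mpr htermA
        filter_upwards [h0, h1, h2, hAsum, hBsum, hAllA] with ω e0 e1 e2 e3 e4 e5
        simp only [Pi.sub_apply, Finset.sum_apply, Pi.zero_apply] at e0 e1 e2 e3 e4 ⊢
        rw [e0, e1, e2, e3, e4, sub_zero]
        rw [Finset.sum_congr rfl fun d _ => e5 d]
      obtain ⟨hθjL, hθeq⟩ := main M θ hM (hθ.2 j (Nat.zero_le _) hjJ) hIθ
      obtain ⟨hθ'jL, hθ'eq⟩ := main M' θ' hM' (hθ'.2 j (Nat.zero_le _) hjJ) hIθ'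
      refine ⟨hθjL, hθ'jL, ?_⟩
      refine hθeq.trans (Filter.EventuallyEq.trans ?_ hθ'eq.symm)
      have hsame : ∀ d : Fin D,
          μ[fun ω => (r j ω d * β (j+1) ω d) * (μ[θ (j+1)|ℱ (j+1)]) ω|ℱ j]
            =ᵐ[μ] μ[fun ω => (r j ω d * β (j+1) ω d) * (μ[θ' (j+1)|ℱ (j+1)]) ω|ℱ j] := by
        intro d
        refine condExp_congr_ae ?_
        filter_upwards [hce] with ω h
        rw [h]
      filter_upwards [ae_all_iff.mpr hsame] with ω h
      simp only [Pi.sub_apply, Finset.sum_apply]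
      rw [Finset.sum_congr rfl fun d _ => h d]
  intro j hj
  exact (key (J - j) j (by omega)).2.2


end
end

section
/- Perfect control variate for the lower recursion: if r* ∈ A_0 satisfies the optimality condition (r_i^*)^⊤ E_i[β_{i+1} Y_{i+1}] − F_i^{#}(r_i^*) = F_i(E_i[β_{i+1} Y_{i+1}]) P-a.s. for all i = 0,...,J-1, and M* is the Doob martingale of βY, i.e. M*_j = Σ_{i=0}^{j-1} (β_{i+1}Y_{i+1} − E_i[β_{i+1}Y_{i+1}]), then θ^{low}_j(r*, M*) = Y_j P-a.s. for every j = 0,...,J. -/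
open MeasureTheory
open scoped ENNReal

noncomputable section

variable {Ω : Type*} {m0 : MeasurableSpace Ω}

/-- Perfect control variate: if `r* ∈ A_0` satisfies the optimality condition
and `M*` is the Doob martingale of `βY`, then `θ^{low}_j(r*,M*) = Y_j` `P`-a.s. for every
`j = 0,…,J`. -/
theorem perfect_control_variate
    (μ : Measure Ω) [IsProbabilityMeasure μ] (ℱ : Filtration ℕ m0)
    (J D : ℕ) (F : ℕ → Ω → (Fin D → ℝ) → ℝ) (β : ℕ → Ω → Fin D → ℝ) (ξ : Ω → ℝ)
    (hset : Setting μ ℱ J D F β ξ)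
    (Y : ℕ → Ω → ℝ) (hY : IsSolution μ ℱ J D F β ξ Y)
    (r : ℕ → Ω → Fin D → ℝ)
    (hr : IsAdmissibleFrom μ ℱ 0 J D F r)
    (hropt : OptimalityCond μ ℱ 0 J D F β Y r)
    (θ : ℕ → Ω → ℝ)
    (hθ : IsThetaLowFrom μ 0 J D F β ξ r (doobMart μ ℱ (bprod β Y)) θ) :
    ∀ j ≤ J, θ j =ᵐ[μ] Y j := by
  obtain ⟨hYmeas, hYJ, hYrec⟩ := hY
  obtain ⟨hθJ, hθrec⟩ := hθ
  have key : ∀ n j, j + n = J → θ j =ᵐ[μ] Y j := by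
    intro n
    induction n with
    | zero =>
      intro j hj
      simp only [Nat.add_zero] at hj
      subst hj
      filter_upwards [hθJ, hYJ] with ω h1 h2
      rw [h1, h2]
    | succ n ih =>
      intro j hj
      have hjJ : j < J := by omega
      have ih' : θ (j + 1) =ᵐ[μ] Y (j + 1) := ih (j + 1) (by omega)
      filter_upwards [hθrec j (Nat.zero_le j) hjJ, hYrec j hjJ,
        hropt j (Nat.zero_le j) hjJ, ih'] with ω h1 h2 h3 h4
      have hM : ∀ d, doobMart μ ℱ (bprod β Y) (j + 1) ω d - doobMart μ ℱ (bprod β Y) j ω d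
          = bprod β Y (j + 1) ω d - cexpV μ (ℱ j) (bprod β Y (j + 1)) ω d := by
        intro d
        simp [doobMart, Finset.sum_range_succ]
        ring
      rw [h1, h2, ← h3, h4]
      simp only [dotp, hM, bprod, mul_sub, Finset.sum_sub_distrib]
      ring
  intro j hj
  exact key (J - j) j (by omega)

end
end
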